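/- arXiv:2407.13263 — 5 statements merged into one kernel-verified Lean document; each statement's English description precedes it below -/
import Mathlib

section
/- Let d, n ≥ 1, Ω ⊆ ℝ^d measurable, and h, σ, s_a, C₁, C₂, C₃ > 0. Let φ₁,…,φ_n ∈ L²(Ω) satisfy ‖φᵢ‖²_{L²(Ω)} ≤ C₁ h^d for every i, and suppose n h^d ≤ C₂. Let f ∈ L²(Ω), c₁,…,c_n ∈ ℝ, and assume ‖ Σᵢ cᵢ φᵢ − f ‖_{L²(Ω)} ≤ C₃ h^{s_a}. Let ξ₁,…,ξ_n be independent square-integrable real random variables with E[ξᵢ] = 0 and E[ξᵢ²] = 1. Then ( E[ ‖ Σᵢ (cᵢ + σ ξᵢ) φᵢ − f ‖²_{L²(Ω)} ] )^{1/2} ≤ √(C₁ C₂) σ + C₃ h^{s_a}. -/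
open MeasureTheory ProbabilityTheory

lemma my_Lp_coeFn_sum {α : Type*} {m : MeasurableSpace α} {μ : Measure α}
    {ι : Type*} (s : Finset ι) (g : ι → Lp ℝ 2 μ) :
    ⇑(∑ i ∈ s, g i) =ᵐ[μ] fun x => ∑ i ∈ s, g i x := by
  classical
  induction s using Finset.induction_on with
  | empty => simp only [Finset.sum_empty]; exact Lp.coeFn_zero (E := ℝ) (p := 2) (μ := μ)
  | @insert a s hnotmem ih =>
    rw [Finset.sum_insert hnotmem]
    filter_upwards [Lp.coeFn_add (g a) (∑ i ∈ s, g i), ih] with x hx hx2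
    simp only [hx, Pi.add_apply, hx2, Finset.sum_insert hnotmem]


set_option maxHeartbeats 1000000 in
/-- **Upper estimate for the reconstruction error without regularisation**
(Proposition 3.1 in explicit form): if `‖φᵢ‖²_{L²(Ω)} ≤ C₁ h^d`, `n h^d ≤ C₂` and the
discretisation bias satisfies `‖∑ᵢ cᵢ φᵢ − f‖_{L²(Ω)} ≤ C₃ h^{s_a}`, then the root mean
squared error of the noisy reconstruction is at most `√(C₁ C₂) σ + C₃ h^{s_a}`. -/
theorem noreg_upper_estimate
    (d n : ℕ) (hd : 1 ≤ d) (hn : 1 ≤ n)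
    (Ω : Set (Fin d → ℝ)) (hΩ : MeasurableSet Ω)
    (h σ sa C₁ C₂ C₃ : ℝ)
    (hh : 0 < h) (hσ : 0 < σ) (hsa : 0 < sa)
    (hC₁ : 0 < C₁) (hC₂ : 0 < C₂) (hC₃ : 0 < C₃)
    (φ : Fin n → (Fin d → ℝ) → ℝ)
    (hφL2 : ∀ i, MemLp (φ i) 2 (volume.restrict Ω))
    (hφnorm : ∀ i, ((eLpNorm (φ i) 2 (volume.restrict Ω)).toReal) ^ 2 ≤ C₁ * h ^ d)
    (hnh : (n : ℝ) * h ^ d ≤ C₂)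
    (f : (Fin d → ℝ) → ℝ) (hf : MemLp f 2 (volume.restrict Ω))
    (c : Fin n → ℝ)
    (hbias : (eLpNorm (fun x => (∑ i, c i * φ i x) - f x) 2 (volume.restrict Ω)).toReal
      ≤ C₃ * h ^ sa)
    (Ω' : Type) [MeasurableSpace Ω'] (μ : Measure Ω') [IsProbabilityMeasure μ]
    (ξ : Fin n → Ω' → ℝ)
    (hξL2 : ∀ i, MemLp (ξ i) 2 μ)
    (hindep : iIndepFun ξ μ)
    (hmean : ∀ i, ∫ ω, ξ i ω ∂μ = 0)
    (hvar : ∀ i, ∫ ω, (ξ i ω) ^ 2 ∂μ = 1) :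
    Real.sqrt (∫ ω, ((eLpNorm (fun x => (∑ i, (c i + σ * ξ i ω) * φ i x) - f x) 2
        (volume.restrict Ω)).toReal) ^ 2 ∂μ)
      ≤ Real.sqrt (C₁ * C₂) * σ + C₃ * h ^ sa := by
  classical
  set ν := volume.restrict Ω with hνdef
  set Φ : Fin n → Lp ℝ 2 ν := fun i => (hφL2 i).toLp (φ i) with hΦdef
  set F : Lp ℝ 2 ν := hf.toLp f with hFdef
  -- key rewriting
  have key : ∀ a : Fin n → ℝ,
      (eLpNorm (fun x => (∑ i, a i * φ i x) - f x) 2 ν).toReal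
        = ‖(∑ i, a i • Φ i) - F‖ := by
    intro a
    rw [Lp.norm_def]
    congr 1
    refine eLpNorm_congr_ae ?_
    have hsum : ⇑(∑ i, a i • Φ i) =ᵐ[ν] fun x => ∑ i, a i * φ i x := by
      have h1 := my_Lp_coeFn_sum (Finset.univ) (fun i => a i • Φ i)
      have h2 : ∀ i : Fin n, ⇑(a i • Φ i) =ᵐ[ν] fun x => a i * φ i x := by
        intro i
        filter_upwards [Lp.coeFn_smul (a i) (Φ i), (hφL2 i).coeFn_toLp] with x hx hx2
        rw [hx]; simp [hx2, hΦdef]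
      have h3 : ∀ᵐ x ∂ν, ∀ i : Fin n, (a i • Φ i : Lp ℝ 2 ν) x = a i * φ i x :=
        MeasureTheory.ae_all_iff.mpr h2
      filter_upwards [h1, h3] with x hx hx2
      simp only [hx, hx2]
    filter_upwards [Lp.coeFn_sub (∑ i, a i • Φ i) F, hsum, hf.coeFn_toLp] with x hx h1 h2
    rw [hx, Pi.sub_apply, h1]; simp only [hFdef, h2]
  set B : Lp ℝ 2 ν := (∑ i, c i • Φ i) - F with hBdef
  set N : Ω' → Lp ℝ 2 ν := fun ω => ∑ i, ξ i ω • Φ i with hNdef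
  have hBnorm : ‖B‖ ≤ C₃ * h ^ sa := by rw [← key c]; exact hbias
  -- algebraic decomposition
  have hdecomp : ∀ ω, ((∑ i, (c i + σ * ξ i ω) • Φ i) - F : Lp ℝ 2 ν) = B + σ • N ω := by
    intro ω
    rw [hBdef, hNdef]
    simp only [Finset.smul_sum, smul_smul, add_smul, Finset.sum_add_distrib]
    abel
  -- pointwise expansion of the squared norm
  set S : Ω' → ℝ := fun ω => ∑ i, ξ i ω * (inner ℝ B (Φ i) : ℝ) with hSdef
  set T : Ω' → ℝ := fun ω => ∑ i, ∑ j, (ξ i ω * ξ j ω) * (inner ℝ (Φ i) (Φ j) : ℝ) with hTdef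
  set G : Ω' → ℝ := fun ω => ‖B‖ ^ 2 + 2 * σ * S ω + σ ^ 2 * T ω with hGdef
  have hpt : ∀ ω, ((eLpNorm (fun x => (∑ i, (c i + σ * ξ i ω) * φ i x) - f x) 2
      ν).toReal) ^ 2 = G ω := by
    intro ω
    rw [key (fun i => c i + σ * ξ i ω), hdecomp ω, norm_add_sq_real]
    have hinner1 : (inner ℝ B (σ • N ω) : ℝ) = σ * S ω := by
      rw [real_inner_smul_right, hSdef, hNdef]
      simp only [inner_sum, real_inner_smul_right]
    have hinner2 : ‖σ • N ω‖ ^ 2 = σ ^ 2 * T ω := by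
      rw [norm_smul, mul_pow, Real.norm_eq_abs, sq_abs, hTdef, ← real_inner_self_eq_norm_sq,
        hNdef]
      simp only [sum_inner, inner_sum, real_inner_smul_left, real_inner_smul_right,
        Finset.mul_sum]
      congr 1; ext i; congr 1; ext j; rw [real_inner_comm (Φ j) (Φ i)]; ring
    rw [hinner1, hinner2, hGdef]; ring
  -- integrability
  have hIS : ∀ i : Fin n, Integrable (fun ω => ξ i ω * (inner ℝ B (Φ i) : ℝ)) μ :=
    fun i => ((hξL2 i).integrable one_le_two).mul_const _
  have hImul : ∀ i j : Fin n, Integrable (fun ω => ξ i ω * ξ j ω) μ := by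
    intro i j
    have h1 : MemLp (ξ i • ξ j) 1 μ := by
      exact (hξL2 j).smul (hξL2 i)
    have h2 := h1.integrable le_rfl
    exact h2
  have hIT : ∀ i j : Fin n,
      Integrable (fun ω => (ξ i ω * ξ j ω) * (inner ℝ (Φ i) (Φ j) : ℝ)) μ :=
    fun i j => (hImul i j).mul_const _
  have hISsum : Integrable S μ := by
    rw [hSdef]; exact integrable_finset_sum _ fun i _ => hIS i
  have hITsum : Integrable T μ := by
    rw [hTdef]
    exact integrable_finset_sum _ fun i _ => integrable_finset_sum _ fun j _ => hIT i j
  -- cross expectations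
  have hEmul : ∀ i j : Fin n, ∫ ω, ξ i ω * ξ j ω ∂μ = if i = j then 1 else 0 := by
    intro i j
    by_cases hij : i = j
    · subst hij; simp only [if_pos rfl, ← sq]; exact hvar i
    · rw [if_neg hij]
      have hind := hindep.indepFun hij
      have := hind.integral_mul_eq_mul_integral (hξL2 i).1 (hξL2 j).1
      have heq : ∫ ω, ξ i ω * ξ j ω ∂μ = ∫ ω, (ξ i * ξ j) ω ∂μ := by
        simp [Pi.mul_apply]
      rw [heq, this, hmean i, hmean j, mul_zero]
  have hES : ∫ ω, S ω ∂μ = 0 := by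
    rw [hSdef, integral_finset_sum _ fun i _ => hIS i]
    refine Finset.sum_eq_zero fun i _ => ?_
    rw [integral_mul_const, hmean i, zero_mul]
  have hET : ∫ ω, T ω ∂μ = ∑ i, ‖Φ i‖ ^ 2 := by
    rw [hTdef, integral_finset_sum _ fun i _ => integrable_finset_sum _ fun j _ => hIT i j]
    refine Finset.sum_congr rfl fun i _ => ?_
    rw [integral_finset_sum _ fun j _ => hIT i j]
    rw [Finset.sum_eq_single i]
    · rw [integral_mul_const, hEmul i i, if_pos rfl, one_mul, real_inner_self_eq_norm_sq]
    · intro j _ hji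
      rw [integral_mul_const, hEmul i j, if_neg (Ne.symm hji), zero_mul]
    · intro hi; exact absurd (Finset.mem_univ i) hi
  -- total expectation
  have hEG : ∫ ω, G ω ∂μ = ‖B‖ ^ 2 + σ ^ 2 * ∑ i, ‖Φ i‖ ^ 2 := by
    have IA : Integrable (fun ω => ‖B‖ ^ 2 + 2 * σ * S ω) μ :=
      (integrable_const _).add (hISsum.const_mul _)
    have IB : Integrable (fun ω => σ ^ 2 * T ω) μ := hITsum.const_mul _
    have IC : Integrable (fun _ : Ω' => ‖B‖ ^ 2) μ := integrable_const _
    have ID : Integrable (fun ω => 2 * σ * S ω) μ := hISsum.const_mul _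
    simp only [hGdef]
    rw [integral_add IA IB, integral_add IC ID, integral_const,
      integral_const_mul, integral_const_mul, hES, hET]
    simp
  -- norm bounds
  have hΦi : ∀ i : Fin n, ‖Φ i‖ ^ 2 ≤ C₁ * h ^ d := by
    intro i
    have hi : ‖Φ i‖ = (eLpNorm (φ i) 2 ν).toReal := MeasureTheory.Lp.norm_toLp (φ i) (hφL2 i)
    rw [hi]
    exact hφnorm i
  have hsumΦ : ∑ i, ‖Φ i‖ ^ 2 ≤ C₁ * C₂ := by
    calc ∑ i, ‖Φ i‖ ^ 2 ≤ ∑ _i : Fin n, C₁ * h ^ d :=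
          Finset.sum_le_sum fun i _ => hΦi i
      _ = (n : ℝ) * (C₁ * h ^ d) := by simp [Finset.sum_const, nsmul_eq_mul]
      _ ≤ C₁ * C₂ := by
          have hdpos : (0:ℝ) < h ^ d := pow_pos hh d
          nlinarith
  have hsumΦ0 : (0:ℝ) ≤ ∑ i, ‖Φ i‖ ^ 2 :=
    Finset.sum_nonneg fun i _ => sq_nonneg _
  -- final estimate
  have hgoal : ∫ ω, G ω ∂μ ≤ (Real.sqrt (C₁ * C₂) * σ + C₃ * h ^ sa) ^ 2 := by
    rw [hEG]
    have h1 : ‖B‖ ^ 2 ≤ (C₃ * h ^ sa) ^ 2 := by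
      have := norm_nonneg B
      nlinarith
    have h2 : Real.sqrt (C₁ * C₂) ^ 2 = C₁ * C₂ :=
      Real.sq_sqrt (le_of_lt (mul_pos hC₁ hC₂))
    have h3 : (0:ℝ) ≤ Real.sqrt (C₁ * C₂) := Real.sqrt_nonneg _
    have h4 : (0:ℝ) < C₃ * h ^ sa := mul_pos hC₃ (Real.rpow_pos_of_pos hh sa)
    nlinarith [sq_nonneg σ, mul_nonneg (mul_nonneg h3 hσ.le) h4.le, hsumΦ, hsumΦ0, hσ.le]
  calc Real.sqrt (∫ ω, ((eLpNorm (fun x => (∑ i, (c i + σ * ξ i ω) * φ i x) - f x) 2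
        ν).toReal) ^ 2 ∂μ)
      = Real.sqrt (∫ ω, G ω ∂μ) := by
        congr 1; exact integral_congr_ae (Filter.Eventually.of_forall hpt)
    _ ≤ Real.sqrt ((Real.sqrt (C₁ * C₂) * σ + C₃ * h ^ sa) ^ 2) :=
        Real.sqrt_le_sqrt hgoal
    _ = Real.sqrt (C₁ * C₂) * σ + C₃ * h ^ sa := by
        rw [Real.sqrt_sq (by positivity)]
end

section
/- Let d, n ≥ 1, Ω ⊆ ℝ^d measurable, h, σ, s_a > 0, and 0 < c₁ ≤ C₁, 0 < c₂ ≤ C₂, 0 < c₃ ≤ C₃. Let φ₁,…,φ_n ∈ L²(Ω) with c₁ h^d ≤ ‖φᵢ‖²_{L²(Ω)} ≤ C₁ h^d for all i, and c₂ ≤ n h^d ≤ C₂. Let F be a nonempty set of functions f ∈ L²(Ω), each equipped with a coefficient vector c(f) ∈ ℝⁿ, such that ‖ Σᵢ c(f)ᵢ φᵢ − f ‖_{L²(Ω)} ≤ C₃ h^{s_a} for every f ∈ F, and such that some f₀ ∈ F satisfies ‖ Σᵢ c(f₀)ᵢ φᵢ − f₀ ‖_{L²(Ω)} ≥ c₃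 h^{s_a}. Let ξ₁,…,ξ_n be independent square-integrable real random variables with E[ξᵢ] = 0 and E[ξᵢ²] = 1. Then there exist constants 0 < κ ≤ K depending only on c₁, c₂, c₃, C₁, C₂, C₃ (not on h, σ, n) such that κ (σ + h^{s_a}) ≤ sup_{f ∈ F} ( E[ ‖ Σᵢ (c(f)ᵢ + σ ξᵢ) φᵢ − f ‖²_{L²(Ω)} ] )^{1/2} ≤ K (σ + h^{s_a}). -/
open MeasureTheory ProbabilityTheory
open scoped RealInnerProductSpace

lemma coeFn_sum_smul_toLp {α : Type*} [MeasurableSpace α] {ν : Measure α} {ι : Type*}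
    (s : Finset ι) (a : ι → ℝ) (φ : ι → α → ℝ) (hφ : ∀ i, MemLp (φ i) 2 ν) :
    ⇑(∑ i ∈ s, a i • (hφ i).toLp (φ i)) =ᵐ[ν] fun x => ∑ i ∈ s, a i * φ i x := by
  classical
  induction s using Finset.induction_on with
  | empty => simp only [Finset.sum_empty]; exact Lp.coeFn_zero (E := ℝ) (p := 2) (μ := ν)
  | @insert i s hi ih =>
      rw [Finset.sum_insert hi]
      filter_upwards [Lp.coeFn_add (a i • (hφ i).toLp (φ i)) (∑ j ∈ s, a j • (hφ j).toLp (φ j)),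
        Lp.coeFn_smul (a i) ((hφ i).toLp (φ i)), (hφ i).coeFn_toLp, ih] with x h1 h2 h3 h4
      simp only [h1, Pi.add_apply, h2, Pi.smul_apply, h3, h4, smul_eq_mul,
        Finset.sum_insert hi]

lemma expect_norm_add_sq
    {Ω' : Type} [MeasurableSpace Ω'] {μ : Measure Ω'} [IsProbabilityMeasure μ]
    {V : Type*} [NormedAddCommGroup V] [InnerProductSpace ℝ V]
    {n : ℕ} (b : V) (Φ : Fin n → V) (σ : ℝ) (ξ : Fin n → Ω' → ℝ)
    (hξ : ∀ i, MemLp (ξ i) 2 μ)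
    (hindep : iIndepFun ξ μ)
    (hmean : ∀ i, ∫ ω, ξ i ω ∂μ = 0)
    (hvar : ∀ i, ∫ ω, (ξ i ω) ^ 2 ∂μ = 1) :
    ∫ ω, ‖b + σ • ∑ i, ξ i ω • Φ i‖ ^ 2 ∂μ
      = ‖b‖ ^ 2 + σ ^ 2 * ∑ i, ‖Φ i‖ ^ 2 := by
  classical
  have hint : ∀ i, Integrable (ξ i) μ := fun i => (hξ i).integrable one_le_two
  have hmul : ∀ i j, Integrable (fun ω => ξ i ω * ξ j ω) μ := by
    intro i j
    have h := L2.integrable_inner (𝕜 := ℝ) ((hξ i).toLp (ξ i)) ((hξ j).toLp (ξ j))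
    refine h.congr ?_
    filter_upwards [(hξ i).coeFn_toLp, (hξ j).coeFn_toLp] with ω h1 h2
    simp [h1, h2, real_inner_comm, mul_comm]
  have hprod : ∀ i j, ∫ ω, ξ i ω * ξ j ω ∂μ = if i = j then 1 else 0 := by
    intro i j
    by_cases hij : i = j
    · subst hij
      simp only [if_pos rfl, ← sq]
      exact hvar i
    · rw [if_neg hij]
      have h := (hindep.indepFun hij).integral_fun_mul_eq_mul_integral (hξ i).1 (hξ j).1
      rw [h, hmean i, zero_mul]
  have key : ∀ ω, ‖b + σ • ∑ i, ξ i ω • Φ i‖ ^ 2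
      = ‖b‖ ^ 2 + (2 * σ) * (∑ i, ξ i ω * ⟪b, Φ i⟫)
        + σ ^ 2 * ∑ i, ∑ j, (ξ i ω * ξ j ω) * ⟪Φ i, Φ j⟫ := by
    intro ω
    rw [norm_add_sq_real]
    have h1 : ⟪b, σ • ∑ i, ξ i ω • Φ i⟫ = σ * ∑ i, ξ i ω * ⟪b, Φ i⟫ := by
      rw [real_inner_smul_right, inner_sum]
      simp_rw [real_inner_smul_right]
    have h2 : ‖σ • ∑ i, ξ i ω • Φ i‖ ^ 2
        = σ ^ 2 * ∑ i, ∑ j, (ξ i ω * ξ j ω) * ⟪Φ i, Φ j⟫ := by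
      rw [norm_smul, mul_pow, Real.norm_eq_abs, sq_abs]
      congr 1
      rw [← real_inner_self_eq_norm_sq, sum_inner]
      simp_rw [real_inner_smul_left, inner_sum, real_inner_smul_right, Finset.mul_sum]
      exact Finset.sum_congr rfl fun i _ => Finset.sum_congr rfl fun j _ => by ring
    rw [h1, h2]; ring
  rw [integral_congr_ae (Filter.Eventually.of_forall key)]
  have Ilin : Integrable (fun ω => (2 * σ) * (∑ i, ξ i ω * ⟪b, Φ i⟫)) μ := by
    refine Integrable.const_mul ?_ _
    exact integrable_finset_sum _ fun i _ => (hint i).mul_const _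
  have Iquad : Integrable
      (fun ω => σ ^ 2 * ∑ i, ∑ j, (ξ i ω * ξ j ω) * ⟪Φ i, Φ j⟫) μ := by
    refine Integrable.const_mul ?_ _
    exact integrable_finset_sum _ fun i _ =>
      integrable_finset_sum _ fun j _ => (hmul i j).mul_const _
  have Iconst : Integrable (fun _ω : Ω' => ‖b‖ ^ 2) μ := integrable_const _
  have split1 := integral_add (Iconst.add Ilin) Iquad
  have split2 := integral_add Iconst Ilin
  simp only [Pi.add_apply] at split1 split2
  rw [split1, split2]
  have e1 : ∫ _ω, ‖b‖ ^ 2 ∂μ = ‖b‖ ^ 2 := by simp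
  have e2 : ∫ ω, (2 * σ) * (∑ i, ξ i ω * ⟪b, Φ i⟫) ∂μ = 0 := by
    rw [integral_const_mul]
    rw [integral_finset_sum _ fun i _ => (hint i).mul_const _]
    simp_rw [integral_mul_const]
    simp [hmean]
  have e3 : ∫ ω, σ ^ 2 * ∑ i, ∑ j, (ξ i ω * ξ j ω) * ⟪Φ i, Φ j⟫ ∂μ
      = σ ^ 2 * ∑ i, ‖Φ i‖ ^ 2 := by
    rw [integral_const_mul]
    rw [integral_finset_sum _ fun i _ =>
      integrable_finset_sum _ fun j _ => (hmul i j).mul_const _]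
    congr 1
    refine Finset.sum_congr rfl fun i _ => ?_
    rw [integral_finset_sum _ fun j _ => (hmul i j).mul_const _]
    have : ∀ j, ∫ ω, (ξ i ω * ξ j ω) * ⟪Φ i, Φ j⟫ ∂μ
        = (if i = j then 1 else 0) * ⟪Φ i, Φ j⟫ := fun j => by
      rw [integral_mul_const, hprod]
    simp_rw [this]
    simp [real_inner_self_eq_norm_sq]
  rw [e1, e2, e3, add_zero]

set_option maxHeartbeats 1000000 in
/-- **Two-sided estimate for the error without regularisation** (Lemma 4.1,
`e_noreg(σ,h) ∼ σ + h^{s_a}`): given the two-sided bounds `c₁ h^d ≤ ‖φᵢ‖² ≤ C₁ h^d`,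
`c₂ ≤ n h^d ≤ C₂`, a uniform bias bound `‖∑ c(f)ᵢ φᵢ − f‖ ≤ C₃ h^{s_a}` on a nonempty
class `F`, and a witness `f₀ ∈ F` with bias at least `c₃ h^{s_a}`, there are constants
`0 < κ ≤ K` depending only on `d, s_a, c₁, c₂, c₃, C₁, C₂, C₃` (not on `h, σ, n`) such
that the supremal root mean squared reconstruction error lies between `κ (σ + h^{s_a})`
and `K (σ + h^{s_a})`. -/
theorem noreg_two_sided_estimate
    (d : ℕ) (hd : 1 ≤ d) (sa : ℝ) (hsa : 0 < sa)
    (c₁ C₁ c₂ C₂ c₃ C₃ : ℝ)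
    (hc₁ : 0 < c₁) (hcC₁ : c₁ ≤ C₁) (hc₂ : 0 < c₂) (hcC₂ : c₂ ≤ C₂)
    (hc₃ : 0 < c₃) (hcC₃ : c₃ ≤ C₃) :
    ∃ κ K : ℝ, 0 < κ ∧ κ ≤ K ∧
      ∀ (n : ℕ), 1 ≤ n →
      ∀ (Ω : Set (Fin d → ℝ)), MeasurableSet Ω →
      ∀ (h σ : ℝ), 0 < h → 0 < σ →
      ∀ (φ : Fin n → (Fin d → ℝ) → ℝ),
        (∀ i, MemLp (φ i) 2 (volume.restrict Ω)) →
        (∀ i, c₁ * h ^ d ≤ ((eLpNorm (φ i) 2 (volume.restrict Ω)).toReal) ^ 2) →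
        (∀ i, ((eLpNorm (φ i) 2 (volume.restrict Ω)).toReal) ^ 2 ≤ C₁ * h ^ d) →
        c₂ ≤ (n : ℝ) * h ^ d → (n : ℝ) * h ^ d ≤ C₂ →
      ∀ (F : Set ((Fin d → ℝ) → ℝ)), F.Nonempty →
        (∀ f ∈ F, MemLp f 2 (volume.restrict Ω)) →
      ∀ (coef : ((Fin d → ℝ) → ℝ) → Fin n → ℝ),
        (∀ f ∈ F, (eLpNorm (fun x => (∑ i, coef f i * φ i x) - f x) 2
            (volume.restrict Ω)).toReal ≤ C₃ * h ^ sa) →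
        (∃ f₀ ∈ F, c₃ * h ^ sa ≤ (eLpNorm (fun x => (∑ i, coef f₀ i * φ i x) - f₀ x) 2
            (volume.restrict Ω)).toReal) →
      ∀ (Ω' : Type) [MeasurableSpace Ω'] (μ : Measure Ω') [IsProbabilityMeasure μ],
      ∀ (ξ : Fin n → Ω' → ℝ),
        (∀ i, MemLp (ξ i) 2 μ) →
        iIndepFun ξ μ →
        (∀ i, ∫ ω, ξ i ω ∂μ = 0) →
        (∀ i, ∫ ω, (ξ i ω) ^ 2 ∂μ = 1) →
        κ * (σ + h ^ sa)
          ≤ (⨆ f ∈ F, Real.sqrt (∫ ω,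
              ((eLpNorm (fun x => (∑ i, (coef f i + σ * ξ i ω) * φ i x) - f x) 2
                (volume.restrict Ω)).toReal) ^ 2 ∂μ)) ∧
        (⨆ f ∈ F, Real.sqrt (∫ ω,
              ((eLpNorm (fun x => (∑ i, (coef f i + σ * ξ i ω) * φ i x) - f x) 2
                (volume.restrict Ω)).toReal) ^ 2 ∂μ))
          ≤ K * (σ + h ^ sa) := by
  classical
  have hc₁c₂ : (0:ℝ) < c₁ * c₂ := mul_pos hc₁ hc₂
  refine ⟨min c₃ (Real.sqrt (c₁ * c₂)) / 2, max C₃ (Real.sqrt (C₁ * C₂)), ?_, ?_, ?_⟩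
  · have := Real.sqrt_pos.mpr hc₁c₂
    positivity
  · calc min c₃ (Real.sqrt (c₁ * c₂)) / 2 ≤ c₃ := by
          have : min c₃ (Real.sqrt (c₁ * c₂)) ≤ c₃ := min_le_left _ _
          linarith
      _ ≤ C₃ := hcC₃
      _ ≤ max C₃ (Real.sqrt (C₁ * C₂)) := le_max_left _ _
  intro n hn Ω hΩ h σ hh hσ φ hφmem hlo hhi hnlo hnhi F hFne hFmem coef hbias hwit
    Ω' _ μ _ ξ hξ hindep hmean hvar
  set κ := min c₃ (Real.sqrt (c₁ * c₂)) / 2 with hκdef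
  set K := max C₃ (Real.sqrt (C₁ * C₂)) with hKdef
  set ν := volume.restrict Ω with hν
  set Φ : Fin n → Lp ℝ 2 ν := fun i => (hφmem i).toLp (φ i) with hΦdef
  set S := ∑ i, ‖Φ i‖ ^ 2 with hSdef
  have hΦnorm : ∀ i, ‖Φ i‖ = (eLpNorm (φ i) 2 ν).toReal := fun i =>
    Lp.norm_toLp (φ i) (hφmem i)
  -- bounds on S
  have hSlo : c₁ * c₂ ≤ S := by
    have h1 : (n : ℝ) * (c₁ * h ^ d) ≤ S := by
      have := Finset.card_nsmul_le_sum Finset.univ (fun i => ‖Φ i‖ ^ 2) (c₁ * h ^ d)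
        (fun i _ => by simp only [hΦnorm]; exact hlo i)
      simpa [nsmul_eq_mul] using this
    have h2 : c₁ * c₂ ≤ c₁ * ((n : ℝ) * h ^ d) :=
      mul_le_mul_of_nonneg_left hnlo hc₁.le
    nlinarith
  have hShi : S ≤ C₁ * C₂ := by
    have h1 : S ≤ (n : ℝ) * (C₁ * h ^ d) := by
      have := Finset.sum_le_card_nsmul Finset.univ (fun i => ‖Φ i‖ ^ 2) (C₁ * h ^ d)
        (fun i _ => by simp only [hΦnorm]; exact hhi i)
      simpa [nsmul_eq_mul] using this
    have hC₁ : (0:ℝ) < C₁ := lt_of_lt_of_le hc₁ hcC₁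
    have h2 : C₁ * ((n : ℝ) * h ^ d) ≤ C₁ * C₂ :=
      mul_le_mul_of_nonneg_left hnhi hC₁.le
    nlinarith
  -- the per-function formula
  have Eform : ∀ f ∈ F, ∫ ω,
      ((eLpNorm (fun x => (∑ i, (coef f i + σ * ξ i ω) * φ i x) - f x) 2 ν).toReal) ^ 2 ∂μ
      = ((eLpNorm (fun x => (∑ i, coef f i * φ i x) - f x) 2 ν).toReal) ^ 2 + σ ^ 2 * S := by
    intro f hf
    set fL := (hFmem f hf).toLp f with hfL
    set bL := (∑ i, coef f i • Φ i) - fL with hbL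
    have hbnorm : ‖bL‖ = (eLpNorm (fun x => (∑ i, coef f i * φ i x) - f x) 2 ν).toReal := by
      rw [Lp.norm_def]
      refine congrArg ENNReal.toReal (eLpNorm_congr_ae ?_)
      filter_upwards [Lp.coeFn_sub (∑ i, coef f i • Φ i) fL,
        coeFn_sum_smul_toLp Finset.univ (coef f) φ hφmem, (hFmem f hf).coeFn_toLp]
        with x h1 h2 h3
      simp only [hbL, h1, Pi.sub_apply]; simp only [hΦdef, hfL, h2, h3]
    have herr : ∀ ω, (eLpNorm (fun x => (∑ i, (coef f i + σ * ξ i ω) * φ i x) - f x)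
        2 ν).toReal = ‖bL + σ • ∑ i, ξ i ω • Φ i‖ := by
      intro ω
      have halg : bL + σ • ∑ i, ξ i ω • Φ i
          = (∑ i, (coef f i + σ * ξ i ω) • Φ i) - fL := by
        simp only [hbL, add_smul, Finset.sum_add_distrib, mul_smul, ← Finset.smul_sum]
        abel
      rw [halg, Lp.norm_def]
      refine (congrArg ENNReal.toReal (eLpNorm_congr_ae ?_)).symm
      filter_upwards [Lp.coeFn_sub (∑ i, (coef f i + σ * ξ i ω) • Φ i) fL,
        coeFn_sum_smul_toLp Finset.univ (fun i => coef f i + σ * ξ i ω) φ hφmem,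
        (hFmem f hf).coeFn_toLp] with x h1 h2 h3
      simp only [h1, Pi.sub_apply]; simp only [hΦdef, hfL, h2, h3]
    calc ∫ ω, ((eLpNorm (fun x => (∑ i, (coef f i + σ * ξ i ω) * φ i x) - f x)
            2 ν).toReal) ^ 2 ∂μ
        = ∫ ω, ‖bL + σ • ∑ i, ξ i ω • Φ i‖ ^ 2 ∂μ := by
          refine integral_congr_ae (Filter.Eventually.of_forall fun ω => ?_)
          dsimp only
          rw [herr ω]
      _ = ‖bL‖ ^ 2 + σ ^ 2 * S :=
          expect_norm_add_sq bL Φ σ ξ hξ hindep hmean hvar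
      _ = _ := by rw [hbnorm]
  -- positivity facts
  have hhsa : (0:ℝ) < h ^ sa := Real.rpow_pos_of_pos hh sa
  have hC₁ : (0:ℝ) < C₁ := lt_of_lt_of_le hc₁ hcC₁
  have hC₂ : (0:ℝ) < C₂ := lt_of_lt_of_le hc₂ hcC₂
  have hC₃ : (0:ℝ) < C₃ := lt_of_lt_of_le hc₃ hcC₃
  have hK0 : (0:ℝ) < K := lt_of_lt_of_le (lt_of_lt_of_le hc₃ hcC₃) (le_max_left _ _)
  have hRHS0 : (0:ℝ) ≤ K * (σ + h ^ sa) := by positivity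
  -- uniform upper bound for each f ∈ F
  have hub : ∀ f ∈ F, Real.sqrt (∫ ω,
      ((eLpNorm (fun x => (∑ i, (coef f i + σ * ξ i ω) * φ i x) - f x) 2 ν).toReal) ^ 2 ∂μ)
      ≤ K * (σ + h ^ sa) := by
    intro f hf
    rw [Eform f hf]
    set B := (eLpNorm (fun x => (∑ i, coef f i * φ i x) - f x) 2 ν).toReal with hB
    have hB0 : 0 ≤ B := ENNReal.toReal_nonneg
    have hBle : B ≤ C₃ * h ^ sa := hbias f hf
    have hsqC : Real.sqrt (C₁ * C₂) ^ 2 = C₁ * C₂ :=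
      Real.sq_sqrt (mul_nonneg hC₁.le hC₂.le)
    have h2 : (0:ℝ) ≤ Real.sqrt (C₁ * C₂) := Real.sqrt_nonneg _
    have hstep : B ^ 2 + σ ^ 2 * S ≤ (C₃ * h ^ sa + Real.sqrt (C₁ * C₂) * σ) ^ 2 := by
      have h1 : σ ^ 2 * S ≤ σ ^ 2 * (C₁ * C₂) :=
        mul_le_mul_of_nonneg_left hShi (sq_nonneg σ)
      have hBsq : B ^ 2 ≤ (C₃ * h ^ sa) ^ 2 := by nlinarith
      have hcross : (0:ℝ) ≤ 2 * (C₃ * h ^ sa) * (Real.sqrt (C₁ * C₂) * σ) :=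
        mul_nonneg (mul_nonneg (by norm_num) (mul_nonneg hC₃.le hhsa.le))
          (mul_nonneg h2 hσ.le)
      have he : (C₃ * h ^ sa + Real.sqrt (C₁ * C₂) * σ) ^ 2
          = (C₃ * h ^ sa) ^ 2 + 2 * (C₃ * h ^ sa) * (Real.sqrt (C₁ * C₂) * σ)
            + σ ^ 2 * (C₁ * C₂) := by
        linear_combination σ ^ 2 * hsqC
      linarith
    calc Real.sqrt (B ^ 2 + σ ^ 2 * S)
        ≤ Real.sqrt ((C₃ * h ^ sa + Real.sqrt (C₁ * C₂) * σ) ^ 2) :=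
          Real.sqrt_le_sqrt hstep
      _ = C₃ * h ^ sa + Real.sqrt (C₁ * C₂) * σ :=
          Real.sqrt_sq (add_nonneg (mul_nonneg hC₃.le hhsa.le) (mul_nonneg h2 hσ.le))
      _ ≤ K * (σ + h ^ sa) := by
          have h1' : C₃ ≤ K := le_max_left _ _
          have h2' : Real.sqrt (C₁ * C₂) ≤ K := le_max_right _ _
          have := mul_le_mul_of_nonneg_right h1' hhsa.le
          have := mul_le_mul_of_nonneg_right h2' hσ.le
          nlinarith
  -- handle the biSup
  set G : ((Fin d → ℝ) → ℝ) → ℝ := fun f => Real.sqrt (∫ ω,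
      ((eLpNorm (fun x => (∑ i, (coef f i + σ * ξ i ω) * φ i x) - f x) 2 ν).toReal) ^ 2 ∂μ)
    with hGdef
  have hub' : ∀ f, (⨆ _ : f ∈ F, G f) ≤ K * (σ + h ^ sa) := by
    intro f
    by_cases hf : f ∈ F
    · rw [ciSup_pos hf]; exact hub f hf
    · haveI : IsEmpty (f ∈ F) := ⟨hf⟩
      rw [Real.iSup_of_isEmpty]
      exact hRHS0
  constructor
  · -- lower bound
    obtain ⟨f₀, hf₀, hwit₀⟩ := hwit
    have hbdd : BddAbove (Set.range fun f => ⨆ _ : f ∈ F, G f) := by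
      refine ⟨K * (σ + h ^ sa), ?_⟩
      rintro x ⟨f, rfl⟩
      exact hub' f
    refine le_trans ?_ (le_ciSup_of_le hbdd f₀ (le_of_eq (ciSup_pos hf₀).symm))
    -- κ (σ + h^sa) ≤ G f₀
    have hGf₀ : G f₀ = Real.sqrt
        (((eLpNorm (fun x => (∑ i, coef f₀ i * φ i x) - f₀ x) 2 ν).toReal) ^ 2
          + σ ^ 2 * S) := by
      show Real.sqrt _ = _
      rw [Eform f₀ hf₀]
    rw [hGdef] at hGf₀
    simp only at hGf₀
    rw [hGf₀]
    set B := (eLpNorm (fun x => (∑ i, coef f₀ i * φ i x) - f₀ x) 2 ν).toReal with hB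
    have hB0 : 0 ≤ B := ENNReal.toReal_nonneg
    have hS0 : 0 ≤ S := le_trans hc₁c₂.le hSlo
    have l1 : B ≤ Real.sqrt (B ^ 2 + σ ^ 2 * S) :=
      Real.le_sqrt_of_sq_le (by nlinarith)
    have l2 : σ * Real.sqrt (c₁ * c₂) ≤ Real.sqrt (B ^ 2 + σ ^ 2 * S) := by
      refine Real.le_sqrt_of_sq_le ?_
      have hs : (Real.sqrt (c₁ * c₂)) ^ 2 = c₁ * c₂ := Real.sq_sqrt hc₁c₂.le
      have := mul_le_mul_of_nonneg_left hSlo (sq_nonneg σ)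
      nlinarith
    have hκ1 : 2 * κ ≤ c₃ := by
      rw [hκdef]; have := min_le_left c₃ (Real.sqrt (c₁ * c₂)); linarith
    have hκ2 : 2 * κ ≤ Real.sqrt (c₁ * c₂) := by
      rw [hκdef]; have := min_le_right c₃ (Real.sqrt (c₁ * c₂)); linarith
    have m1 := mul_le_mul_of_nonneg_right hκ1 hhsa.le
    have m2 := mul_le_mul_of_nonneg_right hκ2 hσ.le
    nlinarith [hwit₀, l1, l2]
  · exact Real.iSup_le hub' hRHS0
end

section
/- Let d ≥ 1, Ω ⊆ ℝ^d measurable, K ∈ L¹(ℝ^d) ∩ L²(ℝ^d), β, h > 0, and set K_β(x) := β^{−d} K(x/β). Let φ ∈ L¹(Ω) ∩ L²(Ω), extended by zero to ℝ^d, and let C₁ > 0 satisfy ‖φ‖_{L²(Ω)} ≤ C₁ h^{d/2} and ‖φ‖_{L¹(Ω)} ≤ C₁ h^d. Then ‖K_β ∗ φ‖_{L²(ℝ^d)} ≤ C₁ max(‖K‖_{L¹(ℝ^d)}, ‖K‖_{L²(ℝ^d)}) · min(β^{−1} h, 1)^{d/2} · h^{d/2}. -/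
open MeasureTheory
open ENNReal
variable {d : ℕ}
local notation "G" => Fin d → ℝ



lemma lint_sub_left (f : G → ℝ≥0∞) (x : G) : ∫⁻ y, f (x - y) = ∫⁻ y, f y :=
  (Measure.measurePreserving_sub_left volume x).lintegral_comp_emb
    (MeasurableEquiv.subLeft x).measurableEmbedding f

lemma lint_sub_right (f : G → ℝ≥0∞) (y : G) : ∫⁻ x, f (x - y) = ∫⁻ x, f x :=
  (measurePreserving_sub_right volume y).lintegral_comp_emb
    (MeasurableEquiv.subRight y).measurableEmbedding f

lemma conv_swap (f g : G → ℝ≥0∞) (x : G) :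
    ∫⁻ y, f (x - y) * g y = ∫⁻ y, g (x - y) * f y := by
  calc ∫⁻ y, f (x - y) * g y
      = ∫⁻ z, f (x - (x - z)) * g (x - z) :=
        ((Measure.measurePreserving_sub_left volume x).lintegral_comp_emb
          (MeasurableEquiv.subLeft x).measurableEmbedding
          (fun y => f (x - y) * g y)).symm
    _ = ∫⁻ z, g (x - z) * f z := lintegral_congr fun z => by
        have hz : x - (x - z) = z := by abel
        rw [hz, mul_comm]

lemma young_aux {f g : G → ℝ≥0∞}
    (hf : AEMeasurable f volume) (hg : AEMeasurable g volume)
    (hfp : AEMeasurable (fun p : (G) × (G) => f (p.1 - p.2)) (volume.prod volume)) :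
    ∫⁻ x, (∫⁻ y, f (x - y) * g y) ^ (2:ℝ)
      ≤ (∫⁻ z, f z) ^ (2:ℝ) * ∫⁻ y, g y ^ (2:ℝ) := by
  set I := ∫⁻ z, f z with hI
  by_cases hg0 : ∫⁻ y, g y ^ (2:ℝ) = 0
  · -- g = 0 a.e., so LHS = 0
    have hgz : g =ᵐ[volume] 0 := by
      have := (lintegral_eq_zero_iff' (hg.pow_const (2:ℝ))).mp hg0
      filter_upwards [this] with y hy
      have : g y ^ (2:ℝ) = 0 := hy
      simpa [ENNReal.rpow_eq_zero_iff] using this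
    have : ∀ x, (∫⁻ y, f (x - y) * g y) = 0 := by
      intro x
      have hfx : AEMeasurable (fun y => f (x - y)) volume := by
        exact hf.comp_quasiMeasurePreserving
          (Measure.measurePreserving_sub_left volume x).quasiMeasurePreserving
      refine (lintegral_eq_zero_iff' (hfx.mul hg)).mpr ?_
      filter_upwards [hgz] with y hy
      simp [hy]
    simp [this]
  by_cases hItop : I = ⊤
  · refine le_trans le_top (le_of_eq ?_)
    rw [hItop]
    rw [ENNReal.top_rpow_of_pos (by norm_num)]
    exact (ENNReal.top_mul hg0).symm
  -- main case
  have hconj : Real.HolderConjugate 2 2 := Real.HolderConjugate.two_two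
  have step1 : ∀ x, (∫⁻ y, f (x - y) * g y) ^ (2:ℝ)
      ≤ I * ∫⁻ y, f (x - y) * g y ^ (2:ℝ) := by
    intro x
    have hfx : AEMeasurable (fun y => f (x - y)) volume :=
      hf.comp_quasiMeasurePreserving
        (Measure.measurePreserving_sub_left volume x).quasiMeasurePreserving
    have CS := ENNReal.lintegral_mul_le_Lp_mul_Lq volume hconj
      (f := fun y => f (x - y) ^ (2⁻¹:ℝ)) (g := fun y => f (x - y) ^ (2⁻¹:ℝ) * g y)
      (hfx.pow_const _) ((hfx.pow_const _).mul hg)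
    have e1 : ∀ y, (f (x - y) ^ (2⁻¹:ℝ)) * (f (x - y) ^ (2⁻¹:ℝ) * g y) = f (x - y) * g y := by
      intro y
      rw [← mul_assoc, ← ENNReal.rpow_add_of_nonneg _ _ (by norm_num) (by norm_num)]
      norm_num
    have e2 : ∀ y, (f (x - y) ^ (2⁻¹:ℝ)) ^ (2:ℝ) = f (x - y) := by
      intro y
      rw [← ENNReal.rpow_mul]
      norm_num
    have e3 : ∀ y, ((f (x - y) ^ (2⁻¹:ℝ)) * g y) ^ (2:ℝ) = f (x - y) * g y ^ (2:ℝ) := by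
      intro y
      rw [ENNReal.mul_rpow_of_nonneg _ _ (by norm_num : (0:ℝ) ≤ 2), e2]
    simp only [Pi.mul_apply, e1, e2, e3] at CS
    rw [lint_sub_left f x] at CS
    calc (∫⁻ y, f (x - y) * g y) ^ (2:ℝ)
        ≤ (I ^ ((1:ℝ)/2) * (∫⁻ y, f (x - y) * g y ^ (2:ℝ)) ^ ((1:ℝ)/2)) ^ (2:ℝ) :=
          ENNReal.rpow_le_rpow CS (by norm_num)
      _ = I * ∫⁻ y, f (x - y) * g y ^ (2:ℝ) := by
          rw [ENNReal.mul_rpow_of_nonneg _ _ (by norm_num : (0:ℝ) ≤ 2),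
            ← ENNReal.rpow_mul, ← ENNReal.rpow_mul]
          norm_num
  have hswap : AEMeasurable (Function.uncurry fun x y => f (x - y) * g y ^ (2:ℝ))
      (volume.prod volume) := by
    exact hfp.mul ((hg.comp_quasiMeasurePreserving
      Measure.quasiMeasurePreserving_snd).pow_const _)
  calc ∫⁻ x, (∫⁻ y, f (x - y) * g y) ^ (2:ℝ)
      ≤ ∫⁻ x, I * ∫⁻ y, f (x - y) * g y ^ (2:ℝ) := lintegral_mono step1
    _ = I * ∫⁻ x, ∫⁻ y, f (x - y) * g y ^ (2:ℝ) := lintegral_const_mul' _ _ hItop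
    _ = I * ∫⁻ y, ∫⁻ x, f (x - y) * g y ^ (2:ℝ) := by rw [lintegral_lintegral_swap hswap]
    _ = I * ∫⁻ y, I * g y ^ (2:ℝ) := by
        congr 1
        refine lintegral_congr fun y => ?_
        have hfy : AEMeasurable (fun x => f (x - y)) volume :=
          hf.comp_quasiMeasurePreserving
            (measurePreserving_sub_right volume y).quasiMeasurePreserving
        rw [lintegral_mul_const'' _ hfy, lint_sub_right f y, mul_comm]
    _ = I * (I * ∫⁻ y, g y ^ (2:ℝ)) := by rw [lintegral_const_mul' _ _ hItop]
    _ = I ^ (2:ℝ) * ∫⁻ y, g y ^ (2:ℝ) := by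
        have h2 : I ^ (2:ℝ) = I * I := by
          rw [show (2:ℝ) = ((2:ℕ):ℝ) by norm_num, ENNReal.rpow_natCast, sq]
        rw [h2, mul_assoc]

lemma lint_smul {β : ℝ} (hβ : 0 < β) (u : G → ℝ≥0∞) :
    ∫⁻ z, u (β⁻¹ • z) = ENNReal.ofReal (β ^ d) * ∫⁻ z, u z := by
  have hne : (β⁻¹ : ℝ) ≠ 0 := inv_ne_zero hβ.ne'
  have emb : MeasurableEmbedding (β⁻¹ • · : G → G) := measurableEmbedding_const_smul₀ hne
  have hmap : Measure.map (β⁻¹ • · : G → G) volume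
      = ENNReal.ofReal |((β⁻¹) ^ (Module.finrank ℝ G))⁻¹| • volume :=
    Measure.map_addHaar_smul volume hne
  calc ∫⁻ z, u (β⁻¹ • z)
      = ∫⁻ w, u w ∂(Measure.map (β⁻¹ • · : G → G) volume) := (emb.lintegral_map u).symm
    _ = ENNReal.ofReal |((β⁻¹) ^ (Module.finrank ℝ G))⁻¹| * ∫⁻ z, u z := by
        rw [hmap]; simp [lintegral_smul_measure]
    _ = ENNReal.ofReal (β ^ d) * ∫⁻ z, u z := by
        congr 2
        rw [Module.finrank_fintype_fun_eq_card, Fintype.card_fin]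
        rw [inv_pow, inv_inv, abs_of_pos (by positivity)]




/-- **Variance estimate for mollified basis functions** (key estimate in the proof of
Proposition 3.2): if `K ∈ L¹ ∩ L²(ℝ^d)`, `K_β = β^{−d} K(·/β)`, and `φ` is supported in
`Ω` with `‖φ‖_{L²(Ω)} ≤ C₁ h^{d/2}` and `‖φ‖_{L¹(Ω)} ≤ C₁ h^d`, then
`‖K_β ∗ φ‖_{L²(ℝ^d)} ≤ C₁ max(‖K‖_{L¹}, ‖K‖_{L²}) min(β⁻¹ h, 1)^{d/2} h^{d/2}`. -/
theorem mollified_basis_variance_estimate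
    (d : ℕ) (hd : 1 ≤ d)
    (Ω : Set (Fin d → ℝ)) (hΩ : MeasurableSet Ω)
    (K : (Fin d → ℝ) → ℝ) (hK1 : Integrable K volume) (hK2 : MemLp K 2 volume)
    (β h : ℝ) (hβ : 0 < β) (hh : 0 < h)
    (φ : (Fin d → ℝ) → ℝ)
    (hφsupp : ∀ x, x ∉ Ω → φ x = 0)
    (hφ1 : Integrable φ (volume.restrict Ω)) (hφ2 : MemLp φ 2 (volume.restrict Ω))
    (C₁ : ℝ) (hC₁ : 0 < C₁)
    (hφL2 : (eLpNorm φ 2 (volume.restrict Ω)).toReal ≤ C₁ * h ^ ((d : ℝ) / 2))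
    (hφL1 : (eLpNorm φ 1 (volume.restrict Ω)).toReal ≤ C₁ * h ^ d) :
    (eLpNorm (fun x => ∫ y, (β ^ d)⁻¹ * K (β⁻¹ • (x - y)) * φ y) 2 volume).toReal
      ≤ C₁ * max ((eLpNorm K 1 volume).toReal) ((eLpNorm K 2 volume).toReal)
        * (min (β⁻¹ * h) 1) ^ ((d : ℝ) / 2) * h ^ ((d : ℝ) / 2) := by
  have hβd : (0:ℝ) < β ^ d := by positivity
  have hne : (β⁻¹ : ℝ) ≠ 0 := inv_ne_zero hβ.ne'
  set c : ℝ≥0∞ := ENNReal.ofReal ((β ^ d)⁻¹) with hc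
  set f : (Fin d → ℝ) → ℝ≥0∞ := fun z => (‖K (β⁻¹ • z)‖₊ : ℝ≥0∞) with hfdef
  set g : (Fin d → ℝ) → ℝ≥0∞ := fun y => (‖φ y‖₊ : ℝ≥0∞) with hgdef
  have hKm : AEMeasurable K volume := hK1.aestronglyMeasurable.aemeasurable
  have hf : AEMeasurable f volume := by
    exact (hKm.comp_quasiMeasurePreserving
      (Measure.quasiMeasurePreserving_smul volume hne)).enorm
  have hφind : φ = Ω.indicator φ :=
    (funext fun x => Set.indicator_apply_eq_self.mpr (hφsupp x)).symm
  have hφm : AEStronglyMeasurable φ volume := by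
    rw [hφind]
    exact (aestronglyMeasurable_indicator_iff hΩ).mpr hφ1.aestronglyMeasurable
  have hg : AEMeasurable g volume := hφm.enorm
  have qmp_sub : Measure.QuasiMeasurePreserving
      (fun p : (Fin d → ℝ) × (Fin d → ℝ) => p.1 - p.2) (volume.prod volume) volume := by
    exact Measure.quasiMeasurePreserving_fst.comp
      (measurePreserving_sub_prod volume volume).quasiMeasurePreserving
  have hfp : AEMeasurable (fun p : (Fin d → ℝ) × (Fin d → ℝ) => f (p.1 - p.2))
      (volume.prod volume) := by exact hf.comp_quasiMeasurePreserving qmp_sub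
  have hgp : AEMeasurable (fun p : (Fin d → ℝ) × (Fin d → ℝ) => g (p.1 - p.2))
      (volume.prod volume) := by exact hg.comp_quasiMeasurePreserving qmp_sub
  -- eLpNorm of φ : restrict vs global
  have e1 : eLpNorm φ 1 volume = eLpNorm φ 1 (volume.restrict Ω) := by
    conv_lhs => rw [hφind]
    exact eLpNorm_indicator_eq_eLpNorm_restrict hΩ
  have e2 : eLpNorm φ 2 volume = eLpNorm φ 2 (volume.restrict Ω) := by
    conv_lhs => rw [hφind]
    exact eLpNorm_indicator_eq_eLpNorm_restrict hΩ
  -- lintegral identities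
  have hg1 : ∫⁻ y, g y = eLpNorm φ 1 (volume.restrict Ω) := by
    rw [← e1, eLpNorm_one_eq_lintegral_enorm]
    rfl
  have hg2 : (∫⁻ y, g y ^ (2:ℝ)) ^ ((1:ℝ)/2) = eLpNorm φ 2 (volume.restrict Ω) := by
    rw [← e2, eLpNorm_eq_lintegral_rpow_enorm_toReal two_ne_zero ENNReal.ofNat_ne_top]
    norm_num
    rfl
  have hf1 : ∫⁻ z, f z = ENNReal.ofReal (β ^ d) * eLpNorm K 1 volume := by
    rw [eLpNorm_one_eq_lintegral_enorm]
    exact lint_smul hβ (fun z => (‖K z‖₊ : ℝ≥0∞))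
  have hf2 : ∫⁻ z, f z ^ (2:ℝ)
      = ENNReal.ofReal (β ^ d) * (eLpNorm K 2 volume) ^ (2:ℝ) := by
    have := lint_smul (d := d) hβ (fun z => (‖K z‖₊ : ℝ≥0∞) ^ (2:ℝ))
    rw [hfdef]
    simp only []
    rw [this]
    congr 1
    rw [eLpNorm_eq_lintegral_rpow_enorm_toReal two_ne_zero ENNReal.ofNat_ne_top, ← ENNReal.rpow_mul]
    norm_num
    rfl

  -- finiteness
  have hK1fin : eLpNorm K 1 volume ≠ ⊤ := (memLp_one_iff_integrable.mpr hK1).eLpNorm_ne_top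
  have hK2fin : eLpNorm K 2 volume ≠ ⊤ := hK2.eLpNorm_ne_top
  have hφ1fin : eLpNorm φ 1 (volume.restrict Ω) ≠ ⊤ :=
    (memLp_one_iff_integrable.mpr hφ1).eLpNorm_ne_top
  have hφ2fin : eLpNorm φ 2 (volume.restrict Ω) ≠ ⊤ := hφ2.eLpNorm_ne_top
  -- Step A
  set T : ℝ≥0∞ := ∫⁻ x, (∫⁻ y, f (x - y) * g y) ^ (2:ℝ) with hT
  have hA : eLpNorm (fun x => ∫ y, (β ^ d)⁻¹ * K (β⁻¹ • (x - y)) * φ y) 2 volume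
      ≤ c * T ^ ((1:ℝ)/2) := by
    rw [eLpNorm_eq_lintegral_rpow_enorm_toReal two_ne_zero ENNReal.ofNat_ne_top]
    have hpt : ∀ x, ((‖∫ y, (β ^ d)⁻¹ * K (β⁻¹ • (x - y)) * φ y‖₊ : ℝ≥0∞))
        ≤ c * ∫⁻ y, f (x - y) * g y := by
      intro x
      calc ((‖∫ y, (β ^ d)⁻¹ * K (β⁻¹ • (x - y)) * φ y‖₊ : ℝ≥0∞))
          ≤ ∫⁻ y, ‖(β ^ d)⁻¹ * K (β⁻¹ • (x - y)) * φ y‖₊ :=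
            enorm_integral_le_lintegral_enorm _
        _ = ∫⁻ y, c * (f (x - y) * g y) := by
            refine lintegral_congr fun y => ?_
            rw [nnnorm_mul, nnnorm_mul, ENNReal.coe_mul, ENNReal.coe_mul, mul_assoc]
            congr 1
            rw [← enorm_eq_nnnorm, Real.enorm_eq_ofReal (le_of_lt (by positivity))]
        _ = c * ∫⁻ y, f (x - y) * g y := lintegral_const_mul' _ _ ENNReal.ofReal_ne_top
    have hmono : (∫⁻ x, ((‖∫ y, (β ^ d)⁻¹ * K (β⁻¹ • (x - y)) * φ y‖₊ : ℝ≥0∞)) ^ (2:ℝ))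
        ≤ ∫⁻ x, (c * ∫⁻ y, f (x - y) * g y) ^ (2:ℝ) :=
      lintegral_mono fun x => ENNReal.rpow_le_rpow (hpt x) (by norm_num)
    have hc2 : c ^ (2:ℝ) ≠ ⊤ := ENNReal.rpow_ne_top_of_nonneg (by norm_num) ENNReal.ofReal_ne_top
    calc (∫⁻ x, ((‖∫ y, (β ^ d)⁻¹ * K (β⁻¹ • (x - y)) * φ y‖₊ : ℝ≥0∞)) ^ ((2:ℝ≥0∞).toReal)) ^ (1 / (2:ℝ≥0∞).toReal)
        = (∫⁻ x, ((‖∫ y, (β ^ d)⁻¹ * K (β⁻¹ • (x - y)) * φ y‖₊ : ℝ≥0∞)) ^ (2:ℝ)) ^ ((1:ℝ)/2) := by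
          norm_num
      _ ≤ (∫⁻ x, (c * ∫⁻ y, f (x - y) * g y) ^ (2:ℝ)) ^ ((1:ℝ)/2) :=
          ENNReal.rpow_le_rpow hmono (by norm_num)
      _ = (c ^ (2:ℝ) * T) ^ ((1:ℝ)/2) := by
          congr 1
          simp_rw [ENNReal.mul_rpow_of_nonneg _ _ (by norm_num : (0:ℝ) ≤ 2)]
          rw [lintegral_const_mul' _ _ hc2]
      _ = c * T ^ ((1:ℝ)/2) := by
          rw [ENNReal.mul_rpow_of_nonneg _ _ (by norm_num : (0:ℝ) ≤ 1/2), ← ENNReal.rpow_mul]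
          norm_num
  -- Branch 1 : L¹ kernel
  have hB1 : eLpNorm (fun x => ∫ y, (β ^ d)⁻¹ * K (β⁻¹ • (x - y)) * φ y) 2 volume
      ≤ eLpNorm K 1 volume * eLpNorm φ 2 (volume.restrict Ω) := by
    refine hA.trans ?_
    have hy := young_aux hf hg hfp
    calc c * T ^ ((1:ℝ)/2)
        ≤ c * ((∫⁻ z, f z) ^ (2:ℝ) * ∫⁻ y, g y ^ (2:ℝ)) ^ ((1:ℝ)/2) :=
          mul_le_mul_right (ENNReal.rpow_le_rpow hy (by norm_num)) c
      _ = c * ((∫⁻ z, f z) * (∫⁻ y, g y ^ (2:ℝ)) ^ ((1:ℝ)/2)) := by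
          rw [ENNReal.mul_rpow_of_nonneg _ _ (by norm_num : (0:ℝ) ≤ 1/2), ← ENNReal.rpow_mul]
          norm_num
      _ = (c * ∫⁻ z, f z) * (∫⁻ y, g y ^ (2:ℝ)) ^ ((1:ℝ)/2) := by ring
      _ = eLpNorm K 1 volume * eLpNorm φ 2 (volume.restrict Ω) := by
          rw [hf1, hg2, ← mul_assoc, hc, ← ENNReal.ofReal_mul (by positivity),
            inv_mul_cancel₀ hβd.ne', ENNReal.ofReal_one, one_mul]
  -- Branch 2 : L² kernel
  have hB2 : eLpNorm (fun x => ∫ y, (β ^ d)⁻¹ * K (β⁻¹ • (x - y)) * φ y) 2 volume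
      ≤ ENNReal.ofReal ((β ^ d)⁻¹ * (β ^ d) ^ ((1:ℝ)/2))
        * (eLpNorm K 2 volume * eLpNorm φ 1 (volume.restrict Ω)) := by
    refine hA.trans ?_
    have hTswap : T = ∫⁻ x, (∫⁻ y, g (x - y) * f y) ^ (2:ℝ) := by
      rw [hT]
      exact lintegral_congr fun x => by rw [conv_swap]
    have hy := young_aux hg hf hgp
    calc c * T ^ ((1:ℝ)/2)
        ≤ c * ((∫⁻ z, g z) ^ (2:ℝ) * ∫⁻ y, f y ^ (2:ℝ)) ^ ((1:ℝ)/2) := by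
          rw [hTswap]
          exact mul_le_mul_right (ENNReal.rpow_le_rpow hy (by norm_num)) c
      _ = c * ((∫⁻ z, g z) * (∫⁻ y, f y ^ (2:ℝ)) ^ ((1:ℝ)/2)) := by
          rw [ENNReal.mul_rpow_of_nonneg _ _ (by norm_num : (0:ℝ) ≤ 1/2), ← ENNReal.rpow_mul]
          norm_num
      _ = c * ((ENNReal.ofReal (β ^ d)) ^ ((1:ℝ)/2)
            * (eLpNorm K 2 volume * eLpNorm φ 1 (volume.restrict Ω))) := by
          rw [hg1, hf2, ENNReal.mul_rpow_of_nonneg _ _ (by norm_num : (0:ℝ) ≤ 1/2),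
            ← ENNReal.rpow_mul]
          norm_num
          ring
      _ = ENNReal.ofReal ((β ^ d)⁻¹ * (β ^ d) ^ ((1:ℝ)/2))
            * (eLpNorm K 2 volume * eLpNorm φ 1 (volume.restrict Ω)) := by
          rw [← mul_assoc, hc, ENNReal.ofReal_rpow_of_pos hβd,
            ← ENNReal.ofReal_mul (by positivity : (0:ℝ) ≤ (β ^ d)⁻¹)]
  -- final case split
  set M : ℝ := max ((eLpNorm K 1 volume).toReal) ((eLpNorm K 2 volume).toReal) with hM
  have hMnn : 0 ≤ M := le_trans ENNReal.toReal_nonneg (le_max_left _ _)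
  rcases le_total (β⁻¹ * h) 1 with hmin | hmin
  · -- min = β⁻¹ h ; use branch 2
    rw [min_eq_left hmin]
    have hRHSfin : ENNReal.ofReal ((β ^ d)⁻¹ * (β ^ d) ^ ((1:ℝ)/2))
        * (eLpNorm K 2 volume * eLpNorm φ 1 (volume.restrict Ω)) ≠ ⊤ :=
      ENNReal.mul_ne_top ENNReal.ofReal_ne_top (ENNReal.mul_ne_top hK2fin hφ1fin)
    have h1 := ENNReal.toReal_mono hRHSfin hB2
    rw [ENNReal.toReal_mul, ENNReal.toReal_mul,
      ENNReal.toReal_ofReal (by positivity)] at h1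
    refine h1.trans ?_
    have e_h : (h:ℝ) ^ d = h ^ ((d:ℝ)/2) * h ^ ((d:ℝ)/2) := by
      rw [← Real.rpow_natCast h d, ← Real.rpow_add hh]
      norm_num
    have e_b : ((β ^ d : ℝ))⁻¹ * (β ^ d : ℝ) ^ ((1:ℝ)/2) = β ^ (-((d:ℝ)/2)) := by
      rw [← Real.rpow_natCast β d, ← Real.rpow_neg_one (β ^ (d:ℝ)),
        ← Real.rpow_mul hβ.le, ← Real.rpow_mul hβ.le, ← Real.rpow_add hβ]
      congr 1
      ring
    have e_min : (β⁻¹ * h) ^ ((d:ℝ)/2) = β ^ (-((d:ℝ)/2)) * h ^ ((d:ℝ)/2) := by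
      rw [Real.mul_rpow (inv_nonneg.mpr hβ.le) hh.le, Real.rpow_neg hβ.le,
        ← Real.inv_rpow hβ.le]
    have hscalar : ((β ^ d : ℝ))⁻¹ * (β ^ d : ℝ) ^ ((1:ℝ)/2) * h ^ d
        = (β⁻¹ * h) ^ ((d:ℝ)/2) * h ^ ((d:ℝ)/2) := by
      rw [e_b, e_min, e_h]
      ring
    have hSnn : (0:ℝ) ≤ ((β ^ d : ℝ))⁻¹ * (β ^ d : ℝ) ^ ((1:ℝ)/2) := by positivity
    calc ((β ^ d : ℝ))⁻¹ * (β ^ d : ℝ) ^ ((1:ℝ)/2)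
          * ((eLpNorm K 2 volume).toReal * (eLpNorm φ 1 (volume.restrict Ω)).toReal)
        ≤ ((β ^ d : ℝ))⁻¹ * (β ^ d : ℝ) ^ ((1:ℝ)/2) * (M * (C₁ * h ^ d)) := by
          refine mul_le_mul_of_nonneg_left ?_ hSnn
          exact mul_le_mul (le_max_right _ _) hφL1 ENNReal.toReal_nonneg hMnn
      _ = C₁ * M * (((β ^ d : ℝ))⁻¹ * (β ^ d : ℝ) ^ ((1:ℝ)/2) * h ^ d) := by ring
      _ = C₁ * M * ((β⁻¹ * h) ^ ((d:ℝ)/2) * h ^ ((d:ℝ)/2)) := by rw [hscalar]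
      _ = C₁ * M * (β⁻¹ * h) ^ ((d:ℝ)/2) * h ^ ((d:ℝ)/2) := by ring
  · -- min = 1 ; use branch 1
    rw [min_eq_right hmin, Real.one_rpow, mul_one]
    have hRHSfin : eLpNorm K 1 volume * eLpNorm φ 2 (volume.restrict Ω) ≠ ⊤ :=
      ENNReal.mul_ne_top hK1fin hφ2fin
    have h1 := ENNReal.toReal_mono hRHSfin hB1
    rw [ENNReal.toReal_mul] at h1
    refine h1.trans ?_
    calc (eLpNorm K 1 volume).toReal * (eLpNorm φ 2 (volume.restrict Ω)).toReal
        ≤ M * (C₁ * h ^ ((d:ℝ)/2)) :=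
          mul_le_mul (le_max_left _ _) hφL2 ENNReal.toReal_nonneg hMnn
      _ = C₁ * M * h ^ ((d:ℝ)/2) := by ring
end

section
/- Let d > 0 and s_a > s_r > 0 be real numbers, and set λ_M := s_a + (d/2)(s_a/s_r − 1). Then for every real λ with s_r < λ < λ_M, one has min(λ, s_a) > s_r (2 λ + d)/(2 s_r + d). -/
/-- **It is strictly better not to regularise for `s_r < λ < λ_M`** (exponent comparison
behind Theorem 1.2 / Proposition 4.4): for `d > 0` and `s_a > s_r > 0`, setting
`λ_M = s_a + (d/2)(s_a/s_r − 1)`, every `λ` with `s_r < λ < λ_M` satisfies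
`min(λ, s_a) > s_r (2λ + d)/(2 s_r + d)`. -/
theorem noreg_beats_reg_exponents
    (d sa sr : ℝ) (hd : 0 < d) (hsr : 0 < sr) (hsasr : sr < sa) :
    ∀ l : ℝ, sr < l → l < sa + (d / 2) * (sa / sr - 1) →
      sr * (2 * l + d) / (2 * sr + d) < min l sa := by
  intro l hl hlm
  have hden : (0:ℝ) < 2 * sr + d := by linarith
  have hdiv : sa / sr * sr = sa := div_mul_cancel₀ sa hsr.ne'
  rw [div_lt_iff₀ hden]
  rcases le_total l sa with h | h
  · rw [min_eq_left h]; nlinarith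
  · rw [min_eq_right h]; nlinarith [mul_lt_mul_of_pos_right hlm hsr]
end

section
/- Let d, s_r, s_a > 0 be real numbers, set λ_M := s_a + (d/2)(s_a/s_r − 1), and let λ be a real number with 0 ≤ λ < λ_M. Set γ := s_r (2 λ + d)/(2 s_r + d) and, for h ∈ (0, 1], β*(h) := h^{(2λ+d)/(2 s_r + d)}. Let E : (0, 1] → [0, ∞) and constants C₁, c₂, C₃ > 0 be such that for every h ∈ (0, 1]: E(h) ≤ C₁ ( min( h^λ, β*(h)^{s_r} ) + h^{s_a} + β*(h)^{s_r} ) and E(h)² ≥ c₂ β*(h)^{s_r} ( β*(h)^{s_r} − C₃ h^{s_a} ). Then there exist constants c, C, h₀ > 0 such that c h^{γ} ≤ E(h) ≤ C h^{γ} for every h ∈ (0, h₀]. -/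
/-- **Exact rate of the regularised error below the threshold `λ_M`**
(Proposition 4.2 in conditional form): let `γ = s_r (2λ + d)/(2 s_r + d)` and
`β*(h) = h^{(2λ+d)/(2 s_r + d)}`. If `E : (0,1] → [0,∞)` satisfies
`E(h) ≤ C₁ (min(h^λ, β*(h)^{s_r}) + h^{s_a} + β*(h)^{s_r})` and
`E(h)² ≥ c₂ β*(h)^{s_r} (β*(h)^{s_r} − C₃ h^{s_a})` for all `h ∈ (0,1]`, and
`0 ≤ λ < λ_M = s_a + (d/2)(s_a/s_r − 1)`, then `E(h) ∼ h^γ` for small `h`. -/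
theorem reg_error_exact_rate
    (d sr sa l : ℝ) (hd : 0 < d) (hsr : 0 < sr) (hsa : 0 < sa)
    (hl0 : 0 ≤ l) (hlM : l < sa + (d / 2) * (sa / sr - 1))
    (E : ℝ → ℝ) (C₁ c₂ C₃ : ℝ) (hC₁ : 0 < C₁) (hc₂ : 0 < c₂) (hC₃ : 0 < C₃)
    (hEnonneg : ∀ h : ℝ, 0 < h → h ≤ 1 → 0 ≤ E h)
    (hupper : ∀ h : ℝ, 0 < h → h ≤ 1 →
      E h ≤ C₁ * (min (h ^ l) ((h ^ ((2 * l + d) / (2 * sr + d))) ^ sr)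
        + h ^ sa + (h ^ ((2 * l + d) / (2 * sr + d))) ^ sr))
    (hlower : ∀ h : ℝ, 0 < h → h ≤ 1 →
      c₂ * (h ^ ((2 * l + d) / (2 * sr + d))) ^ sr
          * ((h ^ ((2 * l + d) / (2 * sr + d))) ^ sr - C₃ * h ^ sa)
        ≤ (E h) ^ 2) :
    ∃ c C h₀ : ℝ, 0 < c ∧ 0 < C ∧ 0 < h₀ ∧
      ∀ h : ℝ, 0 < h → h ≤ h₀ →
        c * h ^ (sr * (2 * l + d) / (2 * sr + d)) ≤ E h ∧
        E h ≤ C * h ^ (sr * (2 * l + d) / (2 * sr + d)) := by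
  have hden : (0:ℝ) < 2 * sr + d := by linarith
  set g : ℝ := sr * (2 * l + d) / (2 * sr + d) with hgdef
  have hgpos : 0 < g := by
    apply div_pos _ hden
    nlinarith
  have hgsa : g < sa := by
    rw [hgdef, div_lt_iff₀ hden]
    have h1 : l * sr < (sa + (d / 2) * (sa / sr - 1)) * sr :=
      mul_lt_mul_of_pos_right hlM hsr
    have h2 : (sa + (d / 2) * (sa / sr - 1)) * sr = sa * sr + (d / 2) * (sa - sr) := by
      field_simp
    rw [h2] at h1
    nlinarith
  have hεpos : 0 < sa - g := by linarith
  have hpow : ∀ h : ℝ, 0 < h → (h ^ ((2 * l + d) / (2 * sr + d))) ^ sr = h ^ g := by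
    intro h hh
    rw [← Real.rpow_mul hh.le]
    congr 1
    rw [hgdef, div_mul_eq_mul_div, mul_comm]
  set t : ℝ := (1 / (2 * C₃)) ^ (1 / (sa - g)) with htdef
  have htpos : 0 < t := Real.rpow_pos_of_pos (by positivity) _
  refine ⟨Real.sqrt (c₂ / 2), 3 * C₁, min 1 t, Real.sqrt_pos.2 (by positivity),
    by positivity, lt_min one_pos htpos, ?_⟩
  intro h hh hh0
  have hh1 : h ≤ 1 := le_trans hh0 (min_le_left _ _)
  have hht : h ≤ t := le_trans hh0 (min_le_right _ _)
  have hhg : (0:ℝ) < h ^ g := Real.rpow_pos_of_pos hh _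
  -- bound on the small term
  have hsmall : C₃ * h ^ (sa - g) ≤ 1 / 2 := by
    have h1 : h ^ (sa - g) ≤ t ^ (sa - g) :=
      Real.rpow_le_rpow hh.le hht hεpos.le
    have h2 : t ^ (sa - g) = 1 / (2 * C₃) := by
      rw [htdef, ← Real.rpow_mul (by positivity), one_div_mul_cancel hεpos.ne',
        Real.rpow_one]
    rw [h2] at h1
    calc C₃ * h ^ (sa - g) ≤ C₃ * (1 / (2 * C₃)) :=
          mul_le_mul_of_nonneg_left h1 hC₃.le
      _ = 1 / 2 := by field_simp
  -- splitting of h^sa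
  have hsplit : h ^ sa = h ^ g * h ^ (sa - g) := by
    rw [← Real.rpow_add hh]; ring_nf
  -- lower bound
  have hlow := hlower h hh hh1
  rw [hpow h hh] at hlow
  have hE2 : Real.sqrt (c₂ / 2) ^ 2 * (h ^ g) ^ 2 ≤ (E h) ^ 2 := by
    rw [Real.sq_sqrt (by positivity : (0:ℝ) ≤ c₂ / 2)]
    have : c₂ / 2 * (h ^ g) ^ 2 ≤ c₂ * h ^ g * (h ^ g - C₃ * h ^ sa) := by
      rw [hsplit]
      have h3 : (1:ℝ) / 2 * h ^ g ≤ h ^ g - C₃ * h ^ (sa - g) * h ^ g := by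
        nlinarith
      nlinarith [mul_le_mul_of_nonneg_left h3 (by positivity : (0:ℝ) ≤ c₂ * h ^ g)]
    linarith
  have hlowfin : Real.sqrt (c₂ / 2) * h ^ g ≤ E h := by
    have h1 : (Real.sqrt (c₂ / 2) * h ^ g) ^ 2 ≤ (E h) ^ 2 := by
      rw [mul_pow]; exact hE2
    have h2 := Real.sqrt_le_sqrt h1
    rwa [Real.sqrt_sq (by positivity), Real.sqrt_sq (hEnonneg h hh hh1)] at h2
  -- upper bound
  have hup := hupper h hh hh1
  rw [hpow h hh] at hup
  have hsa_le : h ^ sa ≤ h ^ g :=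
    Real.rpow_le_rpow_of_exponent_ge hh hh1 hgsa.le
  have hmin : min (h ^ l) (h ^ g) ≤ h ^ g := min_le_right _ _
  have hupfin : E h ≤ 3 * C₁ * h ^ g := by
    calc E h ≤ C₁ * (min (h ^ l) (h ^ g) + h ^ sa + h ^ g) := hup
      _ ≤ C₁ * (h ^ g + h ^ g + h ^ g) := by
          apply mul_le_mul_of_nonneg_left _ hC₁.le
          linarith
      _ = 3 * C₁ * h ^ g := by ring
  exact ⟨hlowfin, hupfin⟩
end
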